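/- (Last-jump/first-jump decomposition of the two-block exceedance probability.) Let X = (X_j)_{j∈ℤ} be a stationary ℝ^d-valued sequence, u > 0 and r a positive integer. Set A_1 = {max_{1 ≤ i ≤ r} ‖X_i‖ > u} and A_2 = {max_{r+1 ≤ i ≤ 2r} ‖X_i‖ > u}. Then P(A_1 ∩ A_2) = Σ_{i=1}^{2r−1} (min(i, 2r−i)) · P(‖X_0‖ > u, max_{1 ≤ t ≤ i−1} ‖X_t‖ ≤ u, ‖X_i‖ > u), where for i = 1 the middle maximum is over the empty set (so that condition is vacuous). -/

import Mathlib

open MeasureTheory Filter ProbabilityTheory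

/-- The "jump at `a`, quiet in between, jump at `b`" event. -/
def jumpEvent {Ω : Type*} (d : ℕ) (X : ℤ → Ω → (Fin d → ℝ)) (u : ℝ) (a b : ℤ) : Set Ω :=
  {ω | u < ‖X a ω‖ ∧ (∀ t : ℤ, a < t → t < b → ‖X t ω‖ ≤ u) ∧ u < ‖X b ω‖}

lemma jumpEvent_measurable {Ω : Type*} [MeasurableSpace Ω] (d : ℕ)
    (X : ℤ → Ω → (Fin d → ℝ)) (hmeas : ∀ j, Measurable (X j)) (u : ℝ) (a b : ℤ) :
    MeasurableSet (jumpEvent d X u a b) := by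
  have hn : ∀ t : ℤ, Measurable fun ω => ‖X t ω‖ := fun t => (hmeas t).norm
  have : jumpEvent d X u a b =
      ((fun ω => ‖X a ω‖) ⁻¹' Set.Ioi u) ∩
        ((⋂ t ∈ Set.Ioo a b, (fun ω => ‖X t ω‖) ⁻¹' Set.Iic u)) ∩
        ((fun ω => ‖X b ω‖) ⁻¹' Set.Ioi u) := by
    ext ω
    simp only [jumpEvent, Set.mem_setOf_eq, Set.mem_inter_iff, Set.mem_preimage,
      Set.mem_Ioi, Set.mem_Iic, Set.mem_iInter, Set.mem_Ioo, and_imp]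
    tauto
  rw [this]
  exact (((hn a) measurableSet_Ioi).inter
    (MeasurableSet.biInter (Set.to_countable _) fun t _ => (hn t) measurableSet_Iic)).inter
    ((hn b) measurableSet_Ioi)

lemma jumpEvent_shift {Ω : Type*} [MeasurableSpace Ω] (P : Measure Ω) (d : ℕ)
    (X : ℤ → Ω → (Fin d → ℝ)) (hmeas : ∀ j, Measurable (X j))
    (hstat : ∀ k : ℤ,
      Measure.map (fun ω (j : ℤ) => X (j + k) ω) P
        = Measure.map (fun ω (j : ℤ) => X j ω) P)
    (u : ℝ) (a b : ℤ) :
    P (jumpEvent d X u a b) = P (jumpEvent d X u 0 (b - a)) := by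
  set i : ℤ := b - a with hi
  set C : Set (ℤ → Fin d → ℝ) :=
    {f | u < ‖f 0‖ ∧ (∀ t : ℤ, 0 < t → t < i → ‖f t‖ ≤ u) ∧ u < ‖f i‖} with hCdef
  have hn : ∀ t : ℤ, Measurable fun f : ℤ → Fin d → ℝ => ‖f t‖ :=
    fun t => (measurable_pi_apply t).norm
  have hC : MeasurableSet C := by
    have : C =
        ((fun f : ℤ → Fin d → ℝ => ‖f 0‖) ⁻¹' Set.Ioi u) ∩
          ((⋂ t ∈ Set.Ioo 0 i, (fun f : ℤ → Fin d → ℝ => ‖f t‖) ⁻¹' Set.Iic u)) ∩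
          ((fun f : ℤ → Fin d → ℝ => ‖f i‖) ⁻¹' Set.Ioi u) := by
      ext f
      simp only [hCdef, Set.mem_setOf_eq, Set.mem_inter_iff, Set.mem_preimage,
        Set.mem_Ioi, Set.mem_Iic, Set.mem_iInter, Set.mem_Ioo, and_imp]
      tauto
    rw [this]
    exact (((hn 0) measurableSet_Ioi).inter
      (MeasurableSet.biInter (Set.to_countable _) fun t _ => (hn t) measurableSet_Iic)).inter
      ((hn i) measurableSet_Ioi)
  have hma : Measurable fun ω (j : ℤ) => X (j + a) ω :=
    measurable_pi_lambda _ fun j => hmeas (j + a)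
  have hm0 : Measurable fun ω (j : ℤ) => X j ω :=
    measurable_pi_lambda _ fun j => hmeas j
  have h1 : jumpEvent d X u a b = (fun ω (j : ℤ) => X (j + a) ω) ⁻¹' C := by
    ext ω
    simp only [jumpEvent, hCdef, Set.mem_preimage, Set.mem_setOf_eq, zero_add]
    constructor
    · rintro ⟨h1, h2, h3⟩
      refine ⟨h1, fun t ht1 ht2 => h2 (t + a) (by omega) (by omega), ?_⟩
      have : i + a = b := by omega
      rw [this]; exact h3
    · rintro ⟨h1, h2, h3⟩
      refine ⟨h1, fun t ht1 ht2 => ?_, ?_⟩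
      · have := h2 (t - a) (by omega) (by omega)
        simpa [sub_add_cancel] using this
      · have : i + a = b := by omega
        rw [this] at h3; exact h3
  have h2 : jumpEvent d X u 0 i = (fun ω (j : ℤ) => X j ω) ⁻¹' C := rfl
  rw [h1, h2, ← Measure.map_apply hma hC, ← Measure.map_apply hm0 hC, hstat a]

lemma jump_count (r i : ℕ) (hr : 0 < r) (h1 : 1 ≤ i) (h2 : i ≤ 2 * r - 1) :
    (((Finset.Icc 1 (r : ℤ)) ×ˢ (Finset.Icc ((r : ℤ) + 1) (2 * (r : ℤ)))).filter
        (fun p => p.2 - p.1 = (i : ℤ))).card = min i (2 * r - i) := by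
  have himg : ((Finset.Icc 1 (r : ℤ)) ×ˢ (Finset.Icc ((r : ℤ) + 1) (2 * (r : ℤ)))).filter
        (fun p => p.2 - p.1 = (i : ℤ)) =
      (Finset.Icc (max 1 ((r : ℤ) + 1 - (i : ℤ))) (min (r : ℤ) (2 * (r : ℤ) - (i : ℤ)))).image
        (fun a => (a, a + (i : ℤ))) := by
    ext ⟨a, b⟩
    simp only [Finset.mem_filter, Finset.mem_product, Finset.mem_Icc, Finset.mem_image,
      Prod.mk.injEq, le_max_iff, max_le_iff, le_min_iff, min_le_iff, Prod.ext_iff]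
    constructor
    · rintro ⟨⟨⟨ha1, ha2⟩, hb1, hb2⟩, hd⟩
      exact ⟨a, ⟨by omega, by omega⟩, rfl, by omega⟩
    · rintro ⟨x, ⟨hx1, hx2⟩, hxa, hxb⟩
      constructor
      · constructor <;> constructor <;> omega
      · omega
  rw [himg, Finset.card_image_of_injective _ (fun x y h => ((Prod.mk.injEq _ _ _ _).mp h).1), Int.card_Icc]
  omega

/-- Last-jump/first-jump decomposition of the two-block exceedance
probability for a stationary sequence:
`P(A₁ ∩ A₂) = Σ_{i=1}^{2r−1} min(i, 2r−i) · P(‖X₀‖ > u, max_{1≤t≤i−1} ‖X_t‖ ≤ u, ‖X_i‖ > u)`. -/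
theorem stmt_10
    {Ω : Type*} [MeasurableSpace Ω] (P : Measure Ω) [IsProbabilityMeasure P]
    (d : ℕ) (X : ℤ → Ω → (Fin d → ℝ)) (hmeas : ∀ j, Measurable (X j))
    (hstat : ∀ k : ℤ,
      Measure.map (fun ω (j : ℤ) => X (j + k) ω) P
        = Measure.map (fun ω (j : ℤ) => X j ω) P)
    (u : ℝ) (r : ℕ) (hr : 0 < r) :
    P ({ω | ∃ i : ℤ, 1 ≤ i ∧ i ≤ (r : ℤ) ∧ ‖X i ω‖ > u} ∩
        {ω | ∃ i : ℤ, (r : ℤ) + 1 ≤ i ∧ i ≤ 2 * (r : ℤ) ∧ ‖X i ω‖ > u})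
      = ∑ i ∈ Finset.Icc 1 (2 * r - 1),
          ((min i (2 * r - i) : ℕ) : ENNReal) *
            P {ω | ‖X 0 ω‖ > u ∧
                   (∀ t : ℤ, 1 ≤ t → t ≤ (i : ℤ) - 1 → ‖X t ω‖ ≤ u) ∧
                   ‖X (i : ℤ) ω‖ > u} := by
  classical
  set S := (Finset.Icc 1 (r : ℤ)) ×ˢ (Finset.Icc ((r : ℤ) + 1) (2 * (r : ℤ))) with hS
  have hunion : ({ω | ∃ i : ℤ, 1 ≤ i ∧ i ≤ (r : ℤ) ∧ ‖X i ω‖ > u} ∩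
        {ω | ∃ i : ℤ, (r : ℤ) + 1 ≤ i ∧ i ≤ 2 * (r : ℤ) ∧ ‖X i ω‖ > u})
      = ⋃ p ∈ S, jumpEvent d X u p.1 p.2 := by
    ext ω
    simp only [Set.mem_inter_iff, Set.mem_setOf_eq, Set.mem_iUnion, exists_prop]
    constructor
    · rintro ⟨⟨a0, ha1, ha2, ha3⟩, ⟨b0, hb1, hb2, hb3⟩⟩
      set s := (Finset.Icc 1 (r : ℤ)).filter (fun j => u < ‖X j ω‖) with hsd
      set t := (Finset.Icc ((r : ℤ) + 1) (2 * (r : ℤ))).filter (fun j => u < ‖X j ω‖) with htd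
      have hs : s.Nonempty :=
        ⟨a0, Finset.mem_filter.mpr ⟨Finset.mem_Icc.mpr ⟨ha1, ha2⟩, ha3⟩⟩
      have ht : t.Nonempty :=
        ⟨b0, Finset.mem_filter.mpr ⟨Finset.mem_Icc.mpr ⟨hb1, hb2⟩, hb3⟩⟩
      have haS := s.max'_mem hs
      have hbS := t.min'_mem ht
      rw [Finset.mem_filter, Finset.mem_Icc] at haS hbS
      refine ⟨(s.max' hs, t.min' ht), ?_, ?_⟩
      · exact Finset.mem_product.mpr
          ⟨Finset.mem_Icc.mpr ⟨haS.1.1, haS.1.2⟩, Finset.mem_Icc.mpr ⟨hbS.1.1, hbS.1.2⟩⟩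
      · refine ⟨haS.2, ?_, hbS.2⟩
        intro t' ht1 ht2
        by_contra hcon
        push_neg at hcon
        rcases le_or_gt t' (r : ℤ) with hle | hgt
        · have hmem : t' ∈ s :=
            Finset.mem_filter.mpr ⟨Finset.mem_Icc.mpr ⟨by omega, hle⟩, hcon⟩
          have := Finset.le_max' s t' hmem
          omega
        · have hmem : t' ∈ t :=
            Finset.mem_filter.mpr ⟨Finset.mem_Icc.mpr ⟨by omega, by omega⟩, hcon⟩
          have := Finset.min'_le t t' hmem
          omega
    · rintro ⟨⟨a, b⟩, hpS, hω⟩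
      simp only [hS, Finset.mem_product, Finset.mem_Icc] at hpS
      obtain ⟨⟨ha1, ha2⟩, hb1, hb2⟩ := hpS
      obtain ⟨h1, h2, h3⟩ := hω
      exact ⟨⟨a, ha1, ha2, h1⟩, ⟨b, hb1, hb2, h3⟩⟩
  have hkey : ∀ a b a' b' : ℤ, a ≤ (r : ℤ) → a' ≤ (r : ℤ) → (r : ℤ) < b → (r : ℤ) < b' →
      ∀ ω, ω ∈ jumpEvent d X u a b → ω ∈ jumpEvent d X u a' b' → a = a' ∧ b = b' := by
    intro a b a' b' ha ha' hb hb' ω h h'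
    obtain ⟨h1, h2, h3⟩ := h
    obtain ⟨h1', h2', h3'⟩ := h'
    have haa : a = a' := by
      rcases lt_trichotomy a a' with hc | hc | hc
      · exact absurd h1' (not_lt.mpr (h2 a' hc (by omega)))
      · exact hc
      · exact absurd h1 (not_lt.mpr (h2' a hc (by omega)))
    subst haa
    refine ⟨rfl, ?_⟩
    rcases lt_trichotomy b b' with hc | hc | hc
    · exact absurd h3 (not_lt.mpr (h2' b (by omega) hc))
    · exact hc
    · exact absurd h3' (not_lt.mpr (h2 b' (by omega) hc))
  have hdisj : (↑S : Set (ℤ × ℤ)).PairwiseDisjoint (fun p => jumpEvent d X u p.1 p.2) := by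
    intro p hp q hq hpq
    have hp' := Finset.mem_coe.mp hp
    have hq' := Finset.mem_coe.mp hq
    simp only [hS, Finset.mem_product, Finset.mem_Icc] at hp' hq'
    apply Set.disjoint_left.mpr
    intro ω hω hω'
    exact hpq (Prod.ext_iff.mpr
      (hkey p.1 p.2 q.1 q.2 hp'.1.2 hq'.1.2 (by omega) (by omega) ω hω hω'))
  rw [hunion, measure_biUnion_finset hdisj (fun p _ => jumpEvent_measurable d X hmeas u p.1 p.2)]
  have hst : ∀ p ∈ S, P (jumpEvent d X u p.1 p.2) = P (jumpEvent d X u 0 (p.2 - p.1)) :=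
    fun p _ => jumpEvent_shift P d X hmeas hstat u p.1 p.2
  rw [Finset.sum_congr rfl hst]
  have hmap : ∀ p ∈ S, (p.2 - p.1).toNat ∈ Finset.Icc 1 (2 * r - 1) := by
    intro p hp
    simp only [hS, Finset.mem_product, Finset.mem_Icc] at hp
    simp only [Finset.mem_Icc]
    omega
  rw [← Finset.sum_fiberwise_of_maps_to hmap (fun p => P (jumpEvent d X u 0 (p.2 - p.1)))]
  refine Finset.sum_congr rfl ?_
  intro i hi
  rw [Finset.mem_Icc] at hi
  have hfe : S.filter (fun p => (p.2 - p.1).toNat = i)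
      = S.filter (fun p => p.2 - p.1 = (i : ℤ)) := by
    apply Finset.filter_congr
    intro p hp
    simp only [hS, Finset.mem_product, Finset.mem_Icc] at hp
    constructor <;> intro h <;> omega
  rw [hfe]
  have hq : ∀ p ∈ S.filter (fun p => p.2 - p.1 = (i : ℤ)),
      P (jumpEvent d X u 0 (p.2 - p.1)) = P (jumpEvent d X u 0 (i : ℤ)) := by
    intro p hp
    rw [(Finset.mem_filter.mp hp).2]
  rw [Finset.sum_congr rfl hq, Finset.sum_const, jump_count r i hr hi.1 hi.2, nsmul_eq_mul]
  congr 1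
  refine congrArg P ?_
  ext ω
  simp only [jumpEvent, Set.mem_setOf_eq, gt_iff_lt]
  constructor
  · rintro ⟨h1, h2, h3⟩
    exact ⟨h1, fun t' ht1 ht2 => h2 t' (by omega) (by omega), h3⟩
  · rintro ⟨h1, h2, h3⟩
    exact ⟨h1, fun t' ht1 ht2 => h2 t' (by omega) (by omega), h3⟩
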